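/- There exist an invertible linear map T : ℝ³ → ℝ³, three points c_1, c_2, c_3 on the unit sphere (‖c_i‖ = 1), and three positive reals λ_1, λ_2, λ_3, such that the three sets E_i = {c_i + λ_i • T x : ‖x‖ ≤ 1} (mutually homothetic closed prolate ellipsoids with centers c_i on the sphere) are pairwise disjoint, none contains the origin, and they generate the shadow at the center of the sphere: every line through the origin intersects at least one E_i. -/

import Mathlib

open Metric

noncomputable section ShadowConstruction

private def mv : Fin 3 → ℝ := ![100, 10, 1]

private lemma mv_pos (j : Fin 3) : 0 < mv j := by fin_cases j <;> norm_num [mv]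

private def Tmap : EuclideanSpace ℝ (Fin 3) ≃ₗ[ℝ] EuclideanSpace ℝ (Fin 3) where
  toFun x := WithLp.toLp 2 (fun j => x j / mv j)
  invFun x := WithLp.toLp 2 (fun j => mv j * x j)
  map_add' x y := by ext j; simp [PiLp.add_apply]; ring
  map_smul' r x := by ext j; simp [PiLp.smul_apply]; ring
  left_inv x := by ext j; have := (mv_pos j).ne'; field_simp
  right_inv x := by ext j; have := (mv_pos j).ne'; field_simp

private lemma Tmap_apply (x : EuclideanSpace ℝ (Fin 3)) (j : Fin 3) : Tmap x j = x j / mv j := rfl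

private lemma norm_le_iff (x : EuclideanSpace ℝ (Fin 3)) :
    ‖x‖ ≤ 1 ↔ x 0 ^ 2 + x 1 ^ 2 + x 2 ^ 2 ≤ 1 := by
  have h : ‖x‖ ^ 2 = x 0 ^ 2 + x 1 ^ 2 + x 2 ^ 2 := by
    rw [EuclideanSpace.norm_eq, Real.sq_sqrt (by positivity)]
    simp [Fin.sum_univ_three, sq_abs]
  constructor
  · intro hx; nlinarith [norm_nonneg x]
  · intro hx; nlinarith [norm_nonneg x]

private lemma comp_sq_le (x : EuclideanSpace ℝ (Fin 3)) (h : ‖x‖ ≤ 1) (k : Fin 3) :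
    x k ^ 2 ≤ 1 := by
  have h3 := (norm_le_iff x).1 h
  have h0 := sq_nonneg (x 0); have h1 := sq_nonneg (x 1); have h2 := sq_nonneg (x 2)
  fin_cases k
  · show x 0 ^ 2 ≤ 1; linarith
  · show x 1 ^ 2 ≤ 1; linarith
  · show x 2 ^ 2 ≤ 1; linarith

private lemma disj_aux (i j : Fin 3) (hij : i ≠ j) (hm : 10 * mv j ≤ mv i)
    (x x' : EuclideanSpace ℝ (Fin 3)) (hx : ‖x‖ ≤ 1) (hx' : ‖x'‖ ≤ 1)
    (heq : EuclideanSpace.single i 1 + (Real.sqrt 3/2 * mv i) • Tmap x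
         = EuclideanSpace.single j 1 + (Real.sqrt 3/2 * mv j) • Tmap x') : False := by
  have hmi := mv_pos i
  have hmj := mv_pos j
  have hs3 : Real.sqrt 3 ^ 2 = 3 := Real.sq_sqrt (by norm_num)
  have hs0 : (0:ℝ) ≤ Real.sqrt 3 := Real.sqrt_nonneg 3
  have hr : Real.sqrt 3 < 1.8 := by nlinarith
  have h1 := congrArg (fun z => z i) heq
  have h1' : (1:ℝ) + (Real.sqrt 3/2 * mv i) * (x i / mv i)
      = (Real.sqrt 3/2 * mv j) * (x' i / mv i) := by
    simpa [PiLp.add_apply, PiLp.smul_apply, smul_eq_mul, Tmap_apply,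
      EuclideanSpace.single_apply, hij] using h1
  have hxi := comp_sq_le x hx i
  have hx'i := comp_sq_le x' hx' i
  have hxl : -1 ≤ x i := by nlinarith
  have hx'l : -1 ≤ x' i := by nlinarith
  have hx'u : x' i ≤ 1 := by nlinarith
  have h2 : mv i + Real.sqrt 3/2 * (x i * mv i) = Real.sqrt 3/2 * (mv j * x' i) := by
    have hne : mv i ≠ 0 := hmi.ne'
    field_simp at h1'
    nlinarith [h1']
  nlinarith [h2, mul_nonneg (mul_nonneg hs0 hmi.le) (by linarith : (0:ℝ) ≤ 1 + x i),
    mul_nonneg (mul_nonneg hs0 hmj.le) (by linarith : (0:ℝ) ≤ 1 - x' i),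
    mul_nonneg (by linarith : (0:ℝ) ≤ 1.8 - Real.sqrt 3) hmi.le,
    mul_nonneg (by linarith : (0:ℝ) ≤ 1.8 - Real.sqrt 3) hmj.le]

private lemma key (a b c N : ℝ) (hNdef : N = a^2+b^2+c^2) (hN : 0 < N) (h : N ≤ 3*a^2) :
    ((a*a/N - 1)/(Real.sqrt 3/2))^2 + (a*b/N/(Real.sqrt 3/2))^2 + (a*c/N/(Real.sqrt 3/2))^2 ≤ 1 := by
  have hs : Real.sqrt 3 ^ 2 = 3 := Real.sq_sqrt (by norm_num)
  have hs0 : (0:ℝ) < Real.sqrt 3 := Real.sqrt_pos.mpr (by norm_num)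
  have key2 : ((a*a/N - 1))^2 + (a*b/N)^2 + (a*c/N)^2 ≤ 3/4 := by
    rw [div_sub' hN.ne']
    rw [div_pow, div_pow, div_pow, ← add_div, ← add_div, div_le_iff₀ (by positivity)]
    nlinarith [sq_nonneg N, mul_le_mul_of_nonneg_right h hN.le]
  have e1 : ((a*a/N - 1)/(Real.sqrt 3/2))^2 = ((a*a/N - 1))^2 / (3/4) := by
    rw [div_pow]; congr 1; nlinarith
  have e2 : (a*b/N/(Real.sqrt 3/2))^2 = (a*b/N)^2 / (3/4) := by
    rw [div_pow]; congr 1; nlinarith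
  have e3 : (a*c/N/(Real.sqrt 3/2))^2 = (a*c/N)^2 / (3/4) := by
    rw [div_pow]; congr 1; nlinarith
  rw [e1, e2, e3]; linarith [key2]

private lemma shadow_aux (v : EuclideanSpace ℝ (Fin 3)) (i : Fin 3)
    (hN : 0 < (mv 0*v 0)^2 + (mv 1*v 1)^2 + (mv 2*v 2)^2)
    (hi : (mv 0*v 0)^2 + (mv 1*v 1)^2 + (mv 2*v 2)^2 ≤ 3*(mv i * v i)^2) :
    ∃ t : ℝ, ∃ x : EuclideanSpace ℝ (Fin 3), ‖x‖ ≤ 1 ∧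
      t • v = EuclideanSpace.single i 1 + (Real.sqrt 3/2 * mv i) • Tmap x := by
  have hs0 : (0:ℝ) < Real.sqrt 3 := Real.sqrt_pos.mpr (by norm_num)
  set N : ℝ := (mv 0*v 0)^2 + (mv 1*v 1)^2 + (mv 2*v 2)^2 with hNdef
  refine ⟨mv i * (mv i * v i) / N,
    (WithLp.toLp 2 (fun k => ((mv i * v i) * (mv k * v k) / N - if k = i then 1 else 0)/(Real.sqrt 3/2)) :
      EuclideanSpace ℝ (Fin 3)), ?_, ?_⟩
  · rw [norm_le_iff]
    fin_cases i
    · show ((mv 0*v 0 * (mv 0*v 0) / N - 1)/(Real.sqrt 3/2))^2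
          + ((mv 0*v 0 * (mv 1*v 1) / N - 0)/(Real.sqrt 3/2))^2
          + ((mv 0*v 0 * (mv 2*v 2) / N - 0)/(Real.sqrt 3/2))^2 ≤ 1
      rw [sub_zero, sub_zero]
      exact key (mv 0*v 0) (mv 1*v 1) (mv 2*v 2) N hNdef hN hi
    · show ((mv 1*v 1 * (mv 0*v 0) / N - 0)/(Real.sqrt 3/2))^2
          + ((mv 1*v 1 * (mv 1*v 1) / N - 1)/(Real.sqrt 3/2))^2
          + ((mv 1*v 1 * (mv 2*v 2) / N - 0)/(Real.sqrt 3/2))^2 ≤ 1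
      rw [sub_zero, sub_zero]
      linarith [key (mv 1*v 1) (mv 0*v 0) (mv 2*v 2) N (by rw [hNdef]; ring) hN hi]
    · show ((mv 2*v 2 * (mv 0*v 0) / N - 0)/(Real.sqrt 3/2))^2
          + ((mv 2*v 2 * (mv 1*v 1) / N - 0)/(Real.sqrt 3/2))^2
          + ((mv 2*v 2 * (mv 2*v 2) / N - 1)/(Real.sqrt 3/2))^2 ≤ 1
      rw [sub_zero, sub_zero]
      linarith [key (mv 2*v 2) (mv 0*v 0) (mv 1*v 1) N (by rw [hNdef]; ring) hN hi]
  · have hN0 : N ≠ 0 := hN.ne'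
    have hs0' : Real.sqrt 3/2 ≠ (0:ℝ) := by positivity
    ext k
    have hmk : mv k ≠ 0 := (mv_pos k).ne'
    have hmi : mv i ≠ 0 := (mv_pos i).ne'
    show (mv i * (mv i * v i) / N) * v k
        = (EuclideanSpace.single i (1:ℝ)) k
          + ((Real.sqrt 3/2) * mv i) *
            ((((mv i * v i) * (mv k * v k) / N - if k = i then 1 else 0)/(Real.sqrt 3/2)) / mv k)
    rw [EuclideanSpace.single_apply]
    by_cases hk : k = i
    · subst hk
      simp only [if_pos rfl]
      field_simp
      ring
    · simp only [if_neg hk]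
      field_simp
      ring

/-- Three mutually homothetic closed ellipsoids with centers on the unit sphere,
pairwise disjoint, none containing the origin, can generate the shadow at the
sphere's center. -/
theorem exists_three_homothetic_ellipsoids_shadow :
    ∃ (T : EuclideanSpace ℝ (Fin 3) ≃ₗ[ℝ] EuclideanSpace ℝ (Fin 3))
      (c : Fin 3 → EuclideanSpace ℝ (Fin 3)) (lam : Fin 3 → ℝ)
      (E : Fin 3 → Set (EuclideanSpace ℝ (Fin 3))),
      (∀ i, E i = {y | ∃ x : EuclideanSpace ℝ (Fin 3), ‖x‖ ≤ 1 ∧ y = c i + lam i • T x}) ∧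
      (∀ i, ‖c i‖ = 1) ∧
      (∀ i, 0 < lam i) ∧
      (∀ i j, i ≠ j → Disjoint (E i) (E j)) ∧
      (∀ i, (0 : EuclideanSpace ℝ (Fin 3)) ∉ E i) ∧
      (∀ v : EuclideanSpace ℝ (Fin 3), v ≠ 0 →
        ∃ (i : Fin 3) (t : ℝ), t • v ∈ E i) := by
  classical
  have hs3 : Real.sqrt 3 ^ 2 = 3 := Real.sq_sqrt (by norm_num)
  have hs0 : (0:ℝ) < Real.sqrt 3 := Real.sqrt_pos.mpr (by norm_num)
  refine ⟨Tmap, fun i => EuclideanSpace.single i 1, fun i => Real.sqrt 3/2 * mv i,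
    fun i => {y | ∃ x : EuclideanSpace ℝ (Fin 3), ‖x‖ ≤ 1 ∧
      y = EuclideanSpace.single i 1 + (Real.sqrt 3/2 * mv i) • Tmap x},
    fun i => rfl, fun i => by simp, fun i => mul_pos (by positivity) (mv_pos i), ?_, ?_, ?_⟩
  · -- disjointness
    intro i j hij
    rw [Set.disjoint_left]
    rintro y ⟨x, hx, rfl⟩ ⟨x', hx', heq⟩
    have hcmp : 10 * mv j ≤ mv i ∨ 10 * mv i ≤ mv j := by
      revert hij; fin_cases i <;> fin_cases j <;> norm_num [mv]
    rcases hcmp with h | h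
    · exact disj_aux i j hij h x x' hx hx' heq
    · exact disj_aux j i hij.symm h x' x hx' hx heq.symm
  · -- origin not in E i
    rintro i ⟨x, hx, h0⟩
    have h1 := congrArg (fun z => z i) h0
    have hmi : mv i ≠ 0 := (mv_pos i).ne'
    have h1' : (0:ℝ) = 1 + (Real.sqrt 3/2 * mv i) * (x i / mv i) := by
      simpa [PiLp.add_apply, PiLp.smul_apply, smul_eq_mul, Tmap_apply,
        EuclideanSpace.single_apply] using h1
    have h2 : (0:ℝ) = 1 + Real.sqrt 3/2 * x i := by
      rw [h1']
      congr 1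
      field_simp
    have hxi := comp_sq_le x hx i
    nlinarith [hxi, h2, hs3]
  · -- shadow generation
    intro v hv
    have hex : ∃ k, v k ≠ 0 := by
      by_contra h
      push_neg at h
      exact hv (by ext k; simpa using h k)
    obtain ⟨k, hk⟩ := hex
    have hk' : mv k * v k ≠ 0 := mul_ne_zero (mv_pos k).ne' hk
    have hk2 : 0 < (mv k * v k) ^ 2 :=
      lt_of_le_of_ne (sq_nonneg _) (Ne.symm (pow_ne_zero 2 hk'))
    have hN : 0 < (mv 0*v 0)^2 + (mv 1*v 1)^2 + (mv 2*v 2)^2 := by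
      have h0 := sq_nonneg (mv 0 * v 0)
      have h1 := sq_nonneg (mv 1 * v 1)
      have h2 := sq_nonneg (mv 2 * v 2)
      have hk2' : 0 < (mv 0*v 0)^2 ∨ 0 < (mv 1*v 1)^2 ∨ 0 < (mv 2*v 2)^2 := by
        fin_cases k
        · exact Or.inl hk2
        · exact Or.inr (Or.inl hk2)
        · exact Or.inr (Or.inr hk2)
      rcases hk2' with hp | hp | hp <;> linarith
    have hmax : (mv 0*v 0)^2 + (mv 1*v 1)^2 + (mv 2*v 2)^2 ≤ 3*(mv 0 * v 0)^2
        ∨ (mv 0*v 0)^2 + (mv 1*v 1)^2 + (mv 2*v 2)^2 ≤ 3*(mv 1 * v 1)^2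
        ∨ (mv 0*v 0)^2 + (mv 1*v 1)^2 + (mv 2*v 2)^2 ≤ 3*(mv 2 * v 2)^2 := by
      by_contra hc
      push_neg at hc
      obtain ⟨c1, c2, c3⟩ := hc
      linarith
    rcases hmax with h | h | h
    · obtain ⟨t, x, h1, h2⟩ := shadow_aux v 0 hN h
      exact ⟨0, t, x, h1, h2⟩
    · obtain ⟨t, x, h1, h2⟩ := shadow_aux v 1 hN h
      exact ⟨1, t, x, h1, h2⟩
    · obtain ⟨t, x, h1, h2⟩ := shadow_aux v 2 hN h
      exact ⟨2, t, x, h1, h2⟩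

end ShadowConstruction
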